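/- Let n ≥ 1, A ∈ ℂ^{n×n}, r ≥ 0 a real number, and let 0 < τ₁ ≤ τ₂ ≤ 1 be real. Suppose every z ∈ W_{≥r}(τ₂·A) satisfies Re z > 0, and suppose W_{≥r}(τ₁·A) is nonempty. Then, using the principal argument arg : ℂ \ {0} → (−π, π], one has sup{ arg z : z ∈ W_{≥r}(τ₁·A) } ≤ sup{ arg z : z ∈ W_{≥r}(τ₂·A) } and inf{ arg z : z ∈ W_{≥r}(τ₁·A) } ≥ inf{ arg z : z ∈ W_{≥r}(τ₂·A) }. -/

import Mathlib

open scoped ComplexOrder Matrix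

noncomputable section

/-- The vertically projected Davis–Wielandt shell `W_{≥r}(A)`. -/
def wShell {n : ℕ} (A : Matrix (Fin n) (Fin n) ℂ) (r : ℝ) : Set ℂ :=
  { z | ∃ x : EuclideanSpace ℂ (Fin n), ‖x‖ = 1 ∧ r ≤ ‖Matrix.toEuclideanLin A x‖ ∧
      z = (inner ℂ x (Matrix.toEuclideanLin A x) : ℂ) }

lemma wShell_smul_lin {n : ℕ} (A : Matrix (Fin n) (Fin n) ℂ) (c : ℂ)
    (x : EuclideanSpace ℂ (Fin n)) :
    Matrix.toEuclideanLin (c • A) x = c • Matrix.toEuclideanLin A x := by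
  rw [map_smul]; rfl

lemma arg_image_subset {n : ℕ} (A : Matrix (Fin n) (Fin n) ℂ) (r : ℝ)
    (τ₁ τ₂ : ℝ) (hτ₁ : 0 < τ₁) (hτ₁₂ : τ₁ ≤ τ₂) :
    Complex.arg '' wShell ((τ₁ : ℂ) • A) r ⊆ Complex.arg '' wShell ((τ₂ : ℂ) • A) r := by
  have hτ₂ : 0 < τ₂ := lt_of_lt_of_le hτ₁ hτ₁₂
  rintro a ⟨z, ⟨x, hx, hrle, hz⟩, rfl⟩
  have hnorm : ∀ τ : ℝ, 0 ≤ τ → ‖Matrix.toEuclideanLin ((τ : ℂ) • A) x‖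
      = τ * ‖Matrix.toEuclideanLin A x‖ := by
    intro τ hτ
    rw [wShell_smul_lin, norm_smul, Complex.norm_real, Real.norm_eq_abs, abs_of_nonneg hτ]
  refine ⟨(inner ℂ x (Matrix.toEuclideanLin ((τ₂ : ℂ) • A) x) : ℂ), ⟨x, hx, ?_, rfl⟩, ?_⟩
  · rw [hnorm τ₂ hτ₂.le]
    rw [hnorm τ₁ hτ₁.le] at hrle
    exact hrle.trans (by
      exact mul_le_mul_of_nonneg_right hτ₁₂ (norm_nonneg _))
  · have key : ∀ τ : ℝ, 0 < τ →
        Complex.arg (inner ℂ x (Matrix.toEuclideanLin ((τ : ℂ) • A) x) : ℂ)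
          = Complex.arg (inner ℂ x (Matrix.toEuclideanLin A x) : ℂ) := by
      intro τ hτ
      rw [wShell_smul_lin, inner_smul_right, Complex.arg_real_mul _ hτ]
    rw [key τ₂ hτ₂, hz, key τ₁ hτ₁]

/-- Paper's Proposition 2(b): for `τ ∈ (0, 1]`, the lower constrained phase of `τ·A` is
decreasing in `τ` and the upper constrained phase of `τ·A` is increasing in `τ`. -/
theorem constrained_phase_monotone_in_tau {n : ℕ} (hn : 1 ≤ n)
    (A : Matrix (Fin n) (Fin n) ℂ) (r : ℝ) (hr : 0 ≤ r)
    (τ₁ τ₂ : ℝ) (hτ₁ : 0 < τ₁) (hτ₁₂ : τ₁ ≤ τ₂) (hτ₂ : τ₂ ≤ 1)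
    (hre : ∀ z ∈ wShell ((τ₂ : ℂ) • A) r, 0 < z.re)
    (hne : (wShell ((τ₁ : ℂ) • A) r).Nonempty) :
    sSup (Complex.arg '' wShell ((τ₁ : ℂ) • A) r) ≤
        sSup (Complex.arg '' wShell ((τ₂ : ℂ) • A) r) ∧
    sInf (Complex.arg '' wShell ((τ₂ : ℂ) • A) r) ≤
        sInf (Complex.arg '' wShell ((τ₁ : ℂ) • A) r) := by
  have hsub := arg_image_subset A r τ₁ τ₂ hτ₁ hτ₁₂
  have hne1 : (Complex.arg '' wShell ((τ₁ : ℂ) • A) r).Nonempty := hne.image _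
  have hbddA : BddAbove (Complex.arg '' wShell ((τ₂ : ℂ) • A) r) :=
    ⟨Real.pi, by rintro a ⟨z, _, rfl⟩; exact Complex.arg_le_pi z⟩
  have hbddB : BddBelow (Complex.arg '' wShell ((τ₂ : ℂ) • A) r) :=
    ⟨-Real.pi, by rintro a ⟨z, _, rfl⟩; exact (Complex.neg_pi_lt_arg z).le⟩
  exact ⟨csSup_le_csSup hbddA hne1 hsub, csInf_le_csInf hbddB hne1 hsub⟩
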